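/- arXiv:2411.05553 — 3 statements merged into one kernel-verified Lean document; each statement's English description precedes it below -/
import Mathlib

section
/- Let s ∈ ℕ with s ≥ 1 and let c satisfy 1/(s+1) < c < 1/s. Define σ(α,m) = (1 - αc - (1-α)/m)^m and δ(α) = σ(α, s+1) - σ(α, s) for α ∈ [0,1]. Then δ is strictly decreasing on [0,1], δ(0) = (1 - 1/(s+1))^{s+1} - (1 - 1/s)^s > 0, and δ(1) = (1-c)^{s+1} - (1-c)^s < 0; consequently there exists a unique α* ∈ (0,1) with σ(α*, s) = σ(α*, s+1). -/
lemma aux_pow (s : ℕ) (hs : 1 ≤ s) :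
    ((1:ℝ) - 1/(s:ℝ))^s < (1 - 1/((s:ℝ)+1))^(s+1) := by
  rcases eq_or_lt_of_le hs with h | h
  · rw [← h]; norm_num
  · have hs2 : 2 ≤ (s:ℝ) := by exact_mod_cast h
    set t : ℝ := (s:ℝ) with ht
    have h0 : 0 < t := by linarith
    have h1 : 0 < t + 1 := by linarith
    have h2 : 0 < t^2 - 1 := by nlinarith
    have e1 : (1:ℝ) - 1/t = (t-1)/t := by field_simp
    have e2 : (1:ℝ) - 1/(t+1) = t/(t+1) := by field_simp; ring
    rw [e1, e2, div_pow, div_pow, div_lt_div_iff₀ (by positivity) (by positivity)]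
    have hb : 1 + (s:ℝ) * (1/(t^2-1)) ≤ (1 + 1/(t^2-1))^s := by
      apply one_add_mul_le_pow
      have : 0 < 1/(t^2-1) := by positivity
      linarith
    have key : t^(s+1) * t^s = t * ((t^2-1) * (1 + 1/(t^2-1)))^s := by
      have hx : (t^2-1) * (1 + 1/(t^2-1)) = t^2 := by field_simp; ring
      rw [hx]; ring
    have h3 : (t^2 - 1)^s = (t-1)^s * (t+1)^s := by
      rw [← mul_pow]; ring_nf
    have h4 : (0:ℝ) < (t-1)^s * (t+1)^s :=
      mul_pos (pow_pos (by linarith) s) (pow_pos h1 s)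
    rw [key]
    calc (t-1)^s*(t+1)^(s+1) = (t-1)^s*(t+1)^s*(t+1) := by ring
      _ < (t-1)^s*(t+1)^s * (t*(1 + (s:ℝ)*(1/(t^2-1)))) := by
          apply mul_lt_mul_of_pos_left ?_ h4
          have hts : (s:ℝ) = t := rfl
          rw [hts]
          have hrw : t * (1 + t*(1/(t^2-1))) = t + t^2/(t^2-1) := by
            field_simp
          rw [hrw]
          have h5 : 1 < t^2/(t^2-1) := (one_lt_div h2).mpr (by linarith)
          linarith
      _ ≤ (t-1)^s*(t+1)^s * (t * (1 + 1/(t^2-1))^s) := by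
          apply mul_le_mul_of_nonneg_left ?_ h4.le
          exact mul_le_mul_of_nonneg_left hb h0.le
      _ = t * ((t^2-1) * (1 + 1/(t^2-1)))^s := by rw [mul_pow, h3]; ring

theorem stmt4 (s : ℕ) (hs : 1 ≤ s) (c : ℝ)
    (hc : 1 / (s + 1 : ℝ) < c ∧ c < 1 / (s : ℝ)) :
    StrictAntiOn
      (fun α : ℝ =>
        (1 - α * c - (1 - α) / (s + 1 : ℝ)) ^ (s + 1) -
          (1 - α * c - (1 - α) / (s : ℝ)) ^ s)
      (Set.Icc 0 1) ∧
    (1 - (0 : ℝ) * c - (1 - 0) / (s + 1 : ℝ)) ^ (s + 1) -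
        (1 - (0 : ℝ) * c - (1 - 0) / (s : ℝ)) ^ s =
      (1 - 1 / (s + 1 : ℝ)) ^ (s + 1) - (1 - 1 / (s : ℝ)) ^ s ∧
    0 < (1 - 1 / (s + 1 : ℝ)) ^ (s + 1) - (1 - 1 / (s : ℝ)) ^ s ∧
    (1 - (1 : ℝ) * c - (1 - 1) / (s + 1 : ℝ)) ^ (s + 1) -
        (1 - (1 : ℝ) * c - (1 - 1) / (s : ℝ)) ^ s =
      (1 - c) ^ (s + 1) - (1 - c) ^ s ∧
    (1 - c) ^ (s + 1) - (1 - c) ^ s < 0 ∧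
    ∃! α : ℝ, α ∈ Set.Ioo (0 : ℝ) 1 ∧
      (1 - α * c - (1 - α) / (s : ℝ)) ^ s =
        (1 - α * c - (1 - α) / (s + 1 : ℝ)) ^ (s + 1) := by
  obtain ⟨hc1, hc2⟩ := hc
  have hs1 : (1:ℝ) ≤ (s:ℝ) := by exact_mod_cast hs
  have hs0 : (0:ℝ) < (s:ℝ) := by linarith
  have hsp : (0:ℝ) < (s:ℝ)+1 := by linarith
  have hc0 : 0 < c := lt_trans (by positivity) hc1
  have hcs : c < 1 := lt_of_lt_of_le hc2 (by rw [div_le_one hs0]; linarith)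
  have hB1pos : ∀ α ∈ Set.Icc (0:ℝ) 1, 0 < 1 - α*c - (1-α)/((s:ℝ)+1) := by
    rintro α ⟨ha0, ha1⟩
    have h : (1-α) * (1/((s:ℝ)+1)) ≤ (1-α) * c :=
      mul_le_mul_of_nonneg_left hc1.le (by linarith)
    have h2 : (1-α) * (1/((s:ℝ)+1)) = (1-α)/((s:ℝ)+1) := by ring
    nlinarith [h, h2]
  have hB2nonneg : ∀ α ∈ Set.Icc (0:ℝ) 1, 0 ≤ 1 - α*c - (1-α)/(s:ℝ) := by
    rintro α ⟨ha0, ha1⟩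
    have h1s : 1/(s:ℝ) ≤ 1 := by rw [div_le_one hs0]; linarith
    have h : α * c ≤ α * (1/(s:ℝ)) := mul_le_mul_of_nonneg_left hc2.le ha0
    have h2 : α * (1/(s:ℝ)) + (1-α)/(s:ℝ) = 1/(s:ℝ) := by ring
    nlinarith [h, h2]
  have hanti : StrictAntiOn
      (fun α : ℝ =>
        (1 - α * c - (1 - α) / (s + 1 : ℝ)) ^ (s + 1) -
          (1 - α * c - (1 - α) / (s : ℝ)) ^ s)
      (Set.Icc 0 1) := by
    intro x hx y hy hxy
    have hB1 : 1 - y*c - (1-y)/((s:ℝ)+1) < 1 - x*c - (1-x)/((s:ℝ)+1) := by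
      have h : (y-x) * (1/((s:ℝ)+1)) < (y-x) * c :=
        mul_lt_mul_of_pos_left hc1 (by linarith)
      have h2 : (y-x) * (1/((s:ℝ)+1)) = (1-x)/((s:ℝ)+1) - (1-y)/((s:ℝ)+1) := by ring
      nlinarith [h, h2]
    have hB2 : 1 - x*c - (1-x)/(s:ℝ) < 1 - y*c - (1-y)/(s:ℝ) := by
      have h : (y-x) * c < (y-x) * (1/(s:ℝ)) :=
        mul_lt_mul_of_pos_left hc2 (by linarith)
      have h2 : (y-x) * (1/(s:ℝ)) = (1-x)/(s:ℝ) - (1-y)/(s:ℝ) := by ring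
      nlinarith [h, h2]
    have hp1 : (1 - y*c - (1-y)/((s:ℝ)+1))^(s+1) < (1 - x*c - (1-x)/((s:ℝ)+1))^(s+1) :=
      pow_lt_pow_left₀ hB1 (hB1pos y hy).le (by omega)
    have hp2 : (1 - x*c - (1-x)/(s:ℝ))^s < (1 - y*c - (1-y)/(s:ℝ))^s :=
      pow_lt_pow_left₀ hB2 (hB2nonneg x hx) (by omega)
    simp only
    linarith
  have haux := aux_pow s hs
  have h1c : 0 < 1 - c := by linarith
  have hf1 : (1 - c) ^ (s + 1) - (1 - c) ^ s < 0 := by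
    rw [pow_succ]
    nlinarith [mul_pos (pow_pos h1c s) hc0]
  refine ⟨hanti, by norm_num, sub_pos.mpr haux, by norm_num, hf1, ?_⟩
  set f : ℝ → ℝ := fun α : ℝ =>
      (1 - α * c - (1 - α) / (s + 1 : ℝ)) ^ (s + 1) -
        (1 - α * c - (1 - α) / (s : ℝ)) ^ s with hfdef
  have hf0' : 0 < f 0 := by
    show 0 < (1 - 0 * c - (1 - 0) / ((s:ℝ) + 1)) ^ (s + 1) -
        (1 - 0 * c - (1 - 0) / (s : ℝ)) ^ s
    rw [show (1:ℝ) - 0 * c - (1 - 0) / ((s:ℝ) + 1) = 1 - 1/((s:ℝ)+1) from by ring,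
      show (1:ℝ) - 0 * c - (1 - 0) / (s:ℝ) = 1 - 1/(s:ℝ) from by ring]
    exact sub_pos.mpr haux
  have hf1' : f 1 < 0 := by
    show (1 - 1 * c - (1 - 1) / ((s:ℝ) + 1)) ^ (s + 1) -
        (1 - 1 * c - (1 - 1) / (s : ℝ)) ^ s < 0
    rw [show (1:ℝ) - 1 * c - (1 - 1) / ((s:ℝ) + 1) = 1 - c from by ring,
      show (1:ℝ) - 1 * c - (1 - 1) / (s:ℝ) = 1 - c from by ring]
    exact hf1
  have hcont : ContinuousOn f (Set.Icc 0 1) := by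
    apply Continuous.continuousOn
    fun_prop
  have hivt := intermediate_value_Icc' (by norm_num : (0:ℝ) ≤ 1) hcont
  obtain ⟨α, hαmem, hα⟩ := hivt ⟨hf1'.le, hf0'.le⟩
  have hαIoo : α ∈ Set.Ioo (0:ℝ) 1 := by
    constructor
    · rcases eq_or_lt_of_le hαmem.1 with h | h
      · exfalso; rw [← h] at hα; linarith
      · exact h
    · rcases eq_or_lt_of_le hαmem.2 with h | h
      · exfalso; rw [h] at hα; linarith
      · exact h
  have hαeq : (1 - α * c - (1 - α) / ((s:ℝ) + 1)) ^ (s + 1) -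
      (1 - α * c - (1 - α) / (s : ℝ)) ^ s = 0 := hα
  refine ⟨α, ⟨hαIoo, by linarith⟩, ?_⟩
  rintro β ⟨hβIoo, hβeq⟩
  apply hanti.injOn (Set.Ioo_subset_Icc_self hβIoo) hαmem
  show f β = f α
  rw [hα]
  show (1 - β * c - (1 - β) / ((s:ℝ) + 1)) ^ (s + 1) -
      (1 - β * c - (1 - β) / (s : ℝ)) ^ s = 0
  linarith
end

section
/- For every integer s ≥ 2 and c = 1/s, with α* = 1 - (s-1)·ln(s/(s-1)), the maximum over integers m ≥ 1 of (1 - α*c - (1-α*)/m)^m equals (1 - 1/s)^s = (1-c)^{1/c}. -/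
theorem stmt6 (s : ℕ) (hs : 2 ≤ s) (c : ℝ) (hc : c = 1 / (s : ℝ))
    (α : ℝ) (hα : α = 1 - ((s : ℝ) - 1) * Real.log ((s : ℝ) / ((s : ℝ) - 1))) :
    IsGreatest
      {v : ℝ | ∃ m : ℕ, 1 ≤ m ∧ v = (1 - α * c - (1 - α) / (m : ℝ)) ^ m}
      ((1 - 1 / (s : ℝ)) ^ s) ∧
    (1 - 1 / (s : ℝ)) ^ s = (1 - c) ^ (1 / c : ℝ) := by
  have hS2 : (2:ℝ) ≤ (s:ℝ) := by exact_mod_cast hs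
  set S : ℝ := (s : ℝ) with hSdef
  have hS1 : (1:ℝ) < S := by linarith
  have hS0 : (0:ℝ) < S := by linarith
  have hSm1 : (0:ℝ) < S - 1 := by linarith
  have hratio : 1 < S / (S - 1) := (one_lt_div hSm1).2 (by linarith)
  set L : ℝ := Real.log (S / (S - 1)) with hLdef
  have hLpos : 0 < L := Real.log_pos hratio
  have hLlt : (S - 1) * L < 1 := by
    have h1 : L < S / (S - 1) - 1 :=
      Real.log_lt_sub_one_of_pos (by positivity) (ne_of_gt hratio)
    have h2 : S / (S - 1) - 1 = 1 / (S - 1) := by field_simp; ring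
    rw [h2] at h1
    calc (S - 1) * L < (S - 1) * (1 / (S - 1)) :=
          (mul_lt_mul_of_pos_left h1 hSm1)
      _ = 1 := by field_simp
  have hα0 : 0 < α := by rw [hα]; linarith
  have hα1 : α < 1 := by rw [hα]; nlinarith
  set τ : ℝ := 1 - 1 / S with hτdef
  have hτpos : 0 < τ := by
    have : 1 / S < 1 := by rw [div_lt_one hS0]; linarith
    simp only [hτdef]; linarith
  have hτeq : τ = (S - 1) / S := by rw [hτdef]; field_simp
  have hlogτ : Real.log τ = -L := by
    rw [hτeq, hLdef, Real.log_div (by linarith) (by linarith),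
      Real.log_div (by linarith) (by linarith)]
    ring
  -- second component
  have hpow2 : (1 - 1 / S) ^ s = (1 - c) ^ (1 / c : ℝ) := by
    have hcS : (1 / c : ℝ) = S := by rw [hc]; field_simp
    rw [hcS, hc, hSdef, Real.rpow_natCast]
  refine ⟨⟨⟨s, by omega, ?_⟩, ?_⟩, hpow2⟩
  · -- membership: m = s gives base 1 - 1/S
    have : 1 - α * c - (1 - α) / (s : ℝ) = 1 - 1 / S := by
      rw [hc]; field_simp; rw [← hSdef]; ring
    rw [this]
  · rintro v ⟨m, hm, rfl⟩
    have hM1 : (1:ℝ) ≤ (m:ℝ) := by exact_mod_cast hm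
    set M : ℝ := (m : ℝ) with hMdef
    have hM0 : (0:ℝ) < M := by linarith
    set t : ℝ := 1 - α * c - (1 - α) / M with htdef
    have htα : t ≥ α * (1 - 1 / S) := by
      have h1 : (1 - α) / M ≤ 1 - α := div_le_self (by linarith) hM1
      have h2 : α * c = α / S := by rw [hc]; ring
      have h3 : α * (1 - 1 / S) = α - α / S := by ring
      rw [htdef, h2, h3]; linarith
    have htpos : 0 < t := by
      have : 0 < α * (1 - 1 / S) := by
        apply mul_pos hα0
        have : 1 / S < 1 := by rw [div_lt_one hS0]; linarith
        linarith
      exact lt_of_lt_of_le this htα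
    -- key identity
    have hkey : M * (t / τ - 1) = L * (M - S) := by
      have hceq : c = 1 / S := by rw [hc]
      rw [htdef, hτdef, hceq, hα]
      field_simp
      ring
    have hlog1 : Real.log (t / τ) ≤ t / τ - 1 :=
      Real.log_le_sub_one_of_pos (by positivity)
    have hlogdiv : Real.log (t / τ) = Real.log t - Real.log τ :=
      Real.log_div (ne_of_gt htpos) (ne_of_gt hτpos)
    have hmain : M * Real.log t ≤ S * Real.log τ := by
      have h1 : M * Real.log (t / τ) ≤ M * (t / τ - 1) :=
        mul_le_mul_of_nonneg_left hlog1 (le_of_lt hM0)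
      rw [hkey, hlogdiv] at h1
      rw [hlogτ] at h1 ⊢
      nlinarith [h1]
    have hexp : t ^ m ≤ τ ^ s := by
      calc t ^ m = Real.exp (M * Real.log t) := by
            rw [Real.exp_nat_mul, Real.exp_log htpos]
        _ ≤ Real.exp (S * Real.log τ) := Real.exp_le_exp.mpr hmain
        _ = τ ^ s := by rw [Real.exp_nat_mul, Real.exp_log hτpos]
    simpa [hτdef] using hexp
end

section
/- The function c ↦ 1 - (1-c)^{1/c} on (0,1) satisfies: (a) it is strictly greater than max{c, 1 - 1/e} for every c ∈ (0,1), (b) its limit as c → 0⁺ equals 1 - 1/e, and (c) its limit as c → 1⁻ equals 1. -/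
theorem stmt8 :
    (∀ c ∈ Set.Ioo (0 : ℝ) 1,
      1 - Real.exp (Real.log (1 - c) / c) > max c (1 - 1 / Real.exp 1)) ∧
    Filter.Tendsto (fun c : ℝ => 1 - Real.exp (Real.log (1 - c) / c))
      (nhdsWithin 0 (Set.Ioo (0 : ℝ) 1)) (nhds (1 - 1 / Real.exp 1)) ∧
    Filter.Tendsto (fun c : ℝ => 1 - Real.exp (Real.log (1 - c) / c))
      (nhdsWithin 1 (Set.Ioo (0 : ℝ) 1)) (nhds 1) := by
  refine ⟨?_, ?_, ?_⟩
  · rintro c ⟨hc0, hc1⟩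
    have h1c : (0 : ℝ) < 1 - c := by linarith
    have hL : Real.log (1 - c) < 0 := Real.log_neg h1c (by linarith)
    refine max_lt ?_ ?_
    · -- c < 1 - exp(log(1-c)/c)
      have h : Real.log (1 - c) / c < Real.log (1 - c) := by
        rw [div_lt_iff₀ hc0]
        nlinarith
      have := Real.exp_lt_exp.mpr h
      rw [Real.exp_log h1c] at this
      linarith
    · -- 1 - 1/e < 1 - exp(log(1-c)/c)
      have h : Real.log (1 - c) / c < -1 := by
        rw [div_lt_iff₀ hc0]
        have hl : Real.log (1 - c) < (1 - c) - 1 :=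
          Real.log_lt_sub_one_of_pos h1c (by intro h; simp at h; linarith)
        linarith
      have h2 : Real.exp (Real.log (1 - c) / c) < (Real.exp 1)⁻¹ := by
        simpa [Real.exp_neg] using Real.exp_lt_exp.mpr h
      rw [one_div]
      linarith
  · -- limit at 0
    have hd : HasDerivAt (fun c : ℝ => Real.log (1 - c)) (-1) 0 := by
      have h1 : HasDerivAt (fun c : ℝ => 1 - c) (-1) 0 :=
        ((hasDerivAt_id (0:ℝ)).const_sub 1).congr_deriv (by norm_num)
      have h2 : HasDerivAt Real.log 1 ((fun c : ℝ => 1 - c) 0) := by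
        simpa using Real.hasDerivAt_log (by norm_num : (1:ℝ) - 0 ≠ 0)
      have h3 : HasDerivAt (fun c : ℝ => Real.log (1 - c)) (1 * -1) 0 := h2.comp 0 h1
      simpa using h3
    have hs : Filter.Tendsto (fun c : ℝ => Real.log (1 - c) / c)
        (nhdsWithin 0 (Set.Ioo (0:ℝ) 1)) (nhds (-1)) := by
      have := (hasDerivAt_iff_tendsto_slope.mp hd)
      have hmono : nhdsWithin (0:ℝ) (Set.Ioo 0 1) ≤ nhdsWithin 0 {(0:ℝ)}ᶜ :=
        nhdsWithin_mono _ (by intro x hx; exact ne_of_gt hx.1)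
      have h2 := this.mono_left hmono
      refine h2.congr' ?_
      filter_upwards [self_mem_nhdsWithin] with x hx
      simp [slope_def_field, div_eq_mul_inv, mul_comm]
    have := (Real.continuous_exp.tendsto _).comp hs
    have h3 : Filter.Tendsto (fun c : ℝ => 1 - Real.exp (Real.log (1 - c) / c))
        (nhdsWithin 0 (Set.Ioo (0:ℝ) 1)) (nhds (1 - Real.exp (-1))) :=
      (tendsto_const_nhds.sub this)
    simpa [Real.exp_neg, one_div] using h3
  · -- limit at 1
    have hlog : Filter.Tendsto (fun c : ℝ => Real.log (1 - c))
        (nhdsWithin 1 (Set.Ioo (0:ℝ) 1)) Filter.atBot := by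
      have h1 : Filter.Tendsto (fun c : ℝ => 1 - c)
          (nhdsWithin 1 (Set.Ioo (0:ℝ) 1)) (nhdsWithin 0 (Set.Ioi 0)) := by
        apply tendsto_nhdsWithin_of_tendsto_nhds_of_eventually_within
        · have : Filter.Tendsto (fun c : ℝ => 1 - c) (nhds 1) (nhds 0) := by
            have := (tendsto_const_nhds (x := (1:ℝ))).sub (Filter.tendsto_id (x := nhds (1:ℝ)))
            simpa using this
          exact this.mono_left nhdsWithin_le_nhds
        · filter_upwards [self_mem_nhdsWithin] with x hx
          exact sub_pos.mpr hx.2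
      exact Real.tendsto_log_nhdsGT_zero.comp h1
    have hinv : Filter.Tendsto (fun c : ℝ => 1 / c)
        (nhdsWithin 1 (Set.Ioo (0:ℝ) 1)) (nhds 1) := by
      have : Filter.Tendsto (fun c : ℝ => 1 / c) (nhds (1:ℝ)) (nhds 1) := by
        have := tendsto_inv₀ (one_ne_zero : (1:ℝ) ≠ 0)
        simpa [one_div] using this
      exact this.mono_left nhdsWithin_le_nhds
    have hdiv : Filter.Tendsto (fun c : ℝ => Real.log (1 - c) / c)
        (nhdsWithin 1 (Set.Ioo (0:ℝ) 1)) Filter.atBot := by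
      refine Filter.tendsto_atBot_mono' _ ?_ hlog
      filter_upwards [self_mem_nhdsWithin] with x hx
      have h1x : (0:ℝ) < 1 - x := by linarith [hx.2]
      have hL : Real.log (1 - x) < 0 := Real.log_neg h1x (by linarith [hx.1])
      rw [div_le_iff₀ hx.1]
      nlinarith [hx.1, hx.2]
    have hexp := Real.tendsto_exp_atBot.comp hdiv
    have h3 : Filter.Tendsto (fun c : ℝ => 1 - Real.exp (Real.log (1 - c) / c))
        (nhdsWithin 1 (Set.Ioo (0:ℝ) 1)) (nhds (1 - 0)) :=
      tendsto_const_nhds.sub hexp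
    simpa using h3
end
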